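/- For the oriented 1-d ladder graph (the (1,1)-nanotube) with the ground-state orientation assigning Peierls phases ±i so that each square plaquette has flux π, the Bloch single-particle Hamiltonian H(k) = i·A(e^{ik}) (a 4×4 Hermitian matrix) has all eigenvalues of absolute value at least 1 for every k; hence the single-particle gap satisfies 2λ_1 = 2. -/

import Mathlib

open Matrix Complex

/-- The 4×4 Bloch single-particle Hamiltonian `H(k) = i·A(e^{ik})` of the π-flux oriented
ladder (the `(1,1)`-nanotube in its ground-state orientation), on a doubled (magnetic) unit
cell with sites `(1A, 2A, 1B, 2B)`: Peierls phases `±i` on every bond, chosen so each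
square plaquette carries flux `π`. Rung couplings are `±i` (staggered) and rail couplings
are `i`, with inter-cell hops acquiring the Bloch phase `e^{ik}`. -/
noncomputable def ladderBloch (k : ℝ) : Matrix (Fin 4) (Fin 4) ℂ :=
  let a : ℂ := -I + I * Complex.exp (I * k)
  !![0, -I, a, 0;
     I, 0, 0, a;
     (starRingEnd ℂ) a, 0, 0, I;
     0, (starRingEnd ℂ) a, -I, 0]

lemma ladderBloch_herm (k : ℝ) : (ladderBloch k).IsHermitian := by
  ext i j
  fin_cases i <;> fin_cases j <;>
    simp [ladderBloch, Matrix.conjTranspose_apply, Complex.conj_I]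

lemma ladderBloch_sq (k : ℝ) :
    (ladderBloch k) * (ladderBloch k) =
      algebraMap ℂ (Matrix (Fin 4) (Fin 4) ℂ)
        ((1 + Complex.normSq (-I + I * Complex.exp (I * k)) : ℝ) : ℂ) := by
  have h : ((Complex.normSq (-I + I * Complex.exp (I * k)) : ℝ) : ℂ)
      = (starRingEnd ℂ) (-I + I * Complex.exp (I * k)) * (-I + I * Complex.exp (I * k)) :=
    Complex.normSq_eq_conj_mul_self
  ext i j
  fin_cases i <;> fin_cases j <;>
    simp [ladderBloch, Matrix.mul_apply, Fin.sum_univ_four, Matrix.algebraMap_matrix_apply,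
      Matrix.one_apply] <;>
    push_cast [h] <;> (try simp only [_root_.map_add, _root_.map_mul, _root_.map_neg, Complex.conj_I]) <;> ring

/-- For the π-flux ground-state orientation of the ladder, the Bloch Hamiltonian `H(k)` is
Hermitian and every eigenvalue `μ` of `H(k)` satisfies `|μ| ≥ 1` for every `k`, and the
bound is attained; hence the single-particle gap is `2λ₁ = 2`. -/
theorem ladder_pi_flux_gap :
    (∀ k : ℝ, (ladderBloch k).IsHermitian) ∧
    (∀ (k : ℝ) (μ : ℂ), μ ∈ spectrum ℂ (ladderBloch k) → 1 ≤ ‖μ‖) ∧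
    (∃ (k : ℝ) (μ : ℂ), μ ∈ spectrum ℂ (ladderBloch k) ∧ ‖μ‖ = 1) := by
  have key : ∀ (k : ℝ) (μ : ℂ), μ ∈ spectrum ℂ (ladderBloch k) →
      μ ^ 2 = ((1 + Complex.normSq (-I + I * Complex.exp (I * k)) : ℝ) : ℂ) := by
    intro k μ hμ
    have h1 : μ ^ 2 ∈ spectrum ℂ ((ladderBloch k) ^ 2) := by
      have := spectrum.subset_polynomial_aeval (ladderBloch k) (Polynomial.X ^ 2 : Polynomial ℂ)
      simpa using this ⟨μ, hμ, by simp⟩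
    rw [pow_two, ladderBloch_sq, spectrum.scalar_eq] at h1
    simpa using h1
  refine ⟨ladderBloch_herm, fun k μ hμ => ?_, ?_⟩
  · have h := key k μ hμ
    have habs : ‖μ‖ ^ 2 = 1 + Complex.normSq (-I + I * Complex.exp (I * k)) := by
      have := congrArg (‖·‖) h
      rwa [norm_pow, Complex.norm_real, Real.norm_eq_abs, _root_.abs_of_nonneg (by nlinarith [Complex.normSq_nonneg (-I + I * Complex.exp (I * k))])] at this
    nlinarith [Complex.normSq_nonneg (-I + I * Complex.exp (I * k)), norm_nonneg μ]
  · obtain ⟨μ, hμ⟩ := spectrum.nonempty_of_isAlgClosed_of_finiteDimensional ℂ (ladderBloch 0)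
    refine ⟨0, μ, hμ, ?_⟩
    have h := key 0 μ hμ
    have ha : (-I + I * Complex.exp (I * (0 : ℝ))) = 0 := by simp
    rw [ha] at h
    have := congrArg (‖·‖) h
    rw [norm_pow] at this
    norm_num at this
    rcases this with h1 | h1
    · exact h1
    · nlinarith [norm_nonneg μ]
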